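/- arXiv:2210.17427 — 5 statements merged into one kernel-verified Lean document; each statement's English description precedes it below -/
import Mathlib

section
/- Let p be real with 2 < p ≤ 3. There exists a constant C > 0 (depending only on p) such that for all real a, b ≥ 0 one has |(a+b)^p - a^p - b^p - p a^{p-1} b - p a b^{p-1}| ≤ C a^{p/2} b^{p/2}. -/
set_option maxHeartbeats 1000000

open Real

private lemma tangent_rpow {q x y : ℝ} (hq : 1 ≤ q) (hx : 0 ≤ x) (hy : 0 < y) :
    y ^ q + q * y ^ (q - 1) * (x - y) ≤ x ^ q := by
  have hs : -1 ≤ x / y - 1 := by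
    have : 0 ≤ x / y := div_nonneg hx hy.le
    linarith
  have hB := one_add_mul_self_le_rpow_one_add hs hq
  have h1 : (1 : ℝ) + (x / y - 1) = x / y := by ring
  rw [h1, Real.div_rpow hx hy.le] at hB
  have hyq : 0 < y ^ q := Real.rpow_pos_of_pos hy q
  have h3 : y ^ (q - 1) = y ^ q / y := by
    rw [Real.rpow_sub hy, Real.rpow_one]
  have hB2 := mul_le_mul_of_nonneg_left hB hyq.le
  rw [mul_div_cancel₀ _ hyq.ne'] at hB2
  rw [h3]
  calc y ^ q + q * (y ^ q / y) * (x - y)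
      = y ^ q * (1 + q * (x / y - 1)) := by field_simp
    _ ≤ x ^ q := hB2

private lemma key_half (p : ℝ) (hp1 : 2 < p) (hp2 : p ≤ 3) :
    ∀ a b : ℝ, 0 ≤ a → 0 ≤ b → b ≤ a →
      |(a + b) ^ p - a ^ p - b ^ p - p * a ^ (p - 1) * b - p * a * b ^ (p - 1)| ≤
        20 * (a ^ (p / 2) * b ^ (p / 2)) := by
  intro a b ha hb hba
  rcases eq_or_lt_of_le hb with hb0 | hb0
  · rw [← hb0]
    rw [Real.zero_rpow (by positivity : p ≠ 0), Real.zero_rpow (by positivity : p / 2 ≠ 0),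
      Real.zero_rpow (by linarith : p - 1 ≠ 0)]
    simp
  have ha0 : 0 < a := lt_of_lt_of_le hb0 hba
  have hab : 0 < a + b := by linarith
  set A := a ^ (p / 2) * b ^ (p / 2) with hA
  have hApos : 0 < A := mul_pos (Real.rpow_pos_of_pos ha0 _) (Real.rpow_pos_of_pos hb0 _)
  -- lower bound: tangent at a
  have h1 : a ^ p + p * a ^ (p - 1) * ((a + b) - a) ≤ (a + b) ^ p :=
    tangent_rpow (by linarith) hab.le ha0
  have h1' : 0 ≤ (a + b) ^ p - a ^ p - p * a ^ (p - 1) * b := by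
    have : (a + b) - a = b := by ring
    rw [this] at h1; linarith
  -- upper bounds
  have u1 : (a + b) ^ p + p * (a + b) ^ (p - 1) * (a - (a + b)) ≤ a ^ p :=
    tangent_rpow (by linarith) ha hab
  have u2 : (a + b) ^ (p - 1) + (p - 1) * (a + b) ^ (p - 1 - 1) * (a - (a + b)) ≤ a ^ (p - 1) :=
    tangent_rpow (q := p - 1) (by linarith) ha hab
  have u3 : (a + b) ^ (p - 2) ≤ 2 * a ^ (p - 2) := by
    calc (a + b) ^ (p - 2) ≤ (2 * a) ^ (p - 2) :=
          Real.rpow_le_rpow hab.le (by linarith) (by linarith)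
      _ = 2 ^ (p - 2) * a ^ (p - 2) := Real.mul_rpow (by norm_num) ha
      _ ≤ 2 ^ (1 : ℝ) * a ^ (p - 2) :=
          mul_le_mul_of_nonneg_right
            (Real.rpow_le_rpow_of_exponent_le (by norm_num) (by linarith))
            (Real.rpow_nonneg ha _)
      _ = 2 * a ^ (p - 2) := by rw [Real.rpow_one]
  have u4 : a ^ (p - 2) * (b * b) ≤ A := by
    have hbb : b * b = b ^ (2 - p / 2) * b ^ (p / 2) := by
      rw [← Real.rpow_add hb0, show (2 - p / 2 + p / 2 : ℝ) = ((2:ℕ):ℝ) by push_cast; ring,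
        Real.rpow_natCast]
      ring
    have hb2 : b ^ (2 - p / 2) ≤ a ^ (2 - p / 2) :=
      Real.rpow_le_rpow hb hba (by linarith)
    calc a ^ (p - 2) * (b * b) = a ^ (p - 2) * b ^ (2 - p / 2) * b ^ (p / 2) := by
          rw [hbb]; ring
      _ ≤ a ^ (p - 2) * a ^ (2 - p / 2) * b ^ (p / 2) := by
          gcongr
      _ = a ^ (p / 2) * b ^ (p / 2) := by
          rw [← Real.rpow_add ha0]
          congr 1
          ring
  have hpm : p - 1 - 1 = p - 2 := by ring
  rw [hpm] at u2
  -- combine: R ≤ 2 p (p-1) a^{p-2} b^2 ≤ 2p(p-1) A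
  have hR : (a + b) ^ p - a ^ p - p * a ^ (p - 1) * b ≤ 2 * p * (p - 1) * (a ^ (p - 2) * (b * b)) := by
    have hu2' : (a + b) ^ (p - 1) - a ^ (p - 1) ≤ (p - 1) * (a + b) ^ (p - 2) * b := by
      nlinarith [u2]
    have hu2'' : (a + b) ^ (p - 1) - a ^ (p - 1) ≤ (p - 1) * (2 * a ^ (p - 2)) * b := by
      nlinarith [u3, mul_le_mul_of_nonneg_right u3 hb]
    nlinarith [u1, mul_le_mul_of_nonneg_left hu2'' (by positivity : (0:ℝ) ≤ p * b)]
  have hR2 : (a + b) ^ p - a ^ p - p * a ^ (p - 1) * b ≤ 16 * A := by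
    have hc : (0:ℝ) ≤ 2 * p * (p - 1) := by nlinarith
    have hm1 : 2 * p * (p - 1) * (a ^ (p - 2) * (b * b)) ≤ 2 * p * (p - 1) * A :=
      mul_le_mul_of_nonneg_left u4 hc
    have hm2 : 2 * p * (p - 1) * A ≤ 16 * A := by
      have h16 : 2 * p * (p - 1) ≤ 16 := by nlinarith
      exact mul_le_mul_of_nonneg_right h16 hApos.le
    linarith
  -- b^p ≤ A
  have h3 : b ^ p ≤ A := by
    have : b ^ p = b ^ (p / 2) * b ^ (p / 2) := by
      rw [← Real.rpow_add hb0]; norm_num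
    rw [this]
    exact mul_le_mul_of_nonneg_right (Real.rpow_le_rpow hb hba (by positivity))
      (Real.rpow_nonneg hb _)
  have h3' : 0 ≤ b ^ p := Real.rpow_nonneg hb p
  -- p a b^{p-1} ≤ p A
  have h4 : p * a * b ^ (p - 1) ≤ 3 * A := by
    have hsplit : b ^ (p - 1) = b ^ (p / 2 - 1) * b ^ (p / 2) := by
      rw [← Real.rpow_add hb0]; congr 1; ring
    have hb4 : b ^ (p / 2 - 1) ≤ a ^ (p / 2 - 1) :=
      Real.rpow_le_rpow hb hba (by linarith)
    have haa : a * a ^ (p / 2 - 1) = a ^ (p / 2) := by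
      nth_rewrite 1 [← Real.rpow_one a]
      rw [← Real.rpow_add ha0]; congr 1; ring
    have : a * b ^ (p - 1) ≤ A := by
      calc a * b ^ (p - 1) = a * b ^ (p / 2 - 1) * b ^ (p / 2) := by rw [hsplit]; ring
        _ ≤ a * a ^ (p / 2 - 1) * b ^ (p / 2) := by gcongr
        _ = A := by rw [haa]
    nlinarith [Real.rpow_nonneg hb (p - 1), mul_le_mul_of_nonneg_left this (by positivity : (0:ℝ) ≤ p)]
  have h4' : 0 ≤ p * a * b ^ (p - 1) := by positivity
  rw [abs_le]
  constructor <;> nlinarith [hApos]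

theorem stmt1 (p : ℝ) (hp1 : 2 < p) (hp2 : p ≤ 3) :
    ∃ C : ℝ, 0 < C ∧ ∀ a b : ℝ, 0 ≤ a → 0 ≤ b →
      |(a + b) ^ p - a ^ p - b ^ p - p * a ^ (p - 1) * b - p * a * b ^ (p - 1)| ≤
        C * (a ^ (p / 2) * b ^ (p / 2)) := by
  refine ⟨20, by norm_num, fun a b ha hb => ?_⟩
  rcases le_total b a with hba | hab
  · exact key_half p hp1 hp2 a b ha hb hba
  · have := key_half p hp1 hp2 b a hb ha hab
    calc |(a + b) ^ p - a ^ p - b ^ p - p * a ^ (p - 1) * b - p * a * b ^ (p - 1)|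
        = |(b + a) ^ p - b ^ p - a ^ p - p * b ^ (p - 1) * a - p * b * a ^ (p - 1)| := by
          rw [add_comm a b]; congr 1; ring
      _ ≤ 20 * (b ^ (p / 2) * a ^ (p / 2)) := this
      _ = 20 * (a ^ (p / 2) * b ^ (p / 2)) := by ring
end

section
/- Let p > 3 be real. There exists a constant C > 0 (depending only on p) such that for all real a, b ≥ 0 one has |(a+b)^p - a^p - b^p - p a^{p-1} b - p a b^{p-1}| ≤ C (a^{p-2} b^2 + a^2 b^{p-2}). -/
/-- Tangent-line (concavity-type) upper bound: for `q ≥ 1`,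
`(x+y)^q ≤ x^q + q*y*(x+y)^(q-1)`. -/
lemma tangent_aux {q x y : ℝ} (hq : 1 ≤ q) (hx : 0 ≤ x) (hy : 0 ≤ y) :
    (x + y) ^ q ≤ x ^ q + q * y * (x + y) ^ (q - 1) := by
  rcases eq_or_lt_of_le (add_nonneg hx hy) with h | hS
  · have hx0 : x = 0 := by linarith [hy]
    have hy0 : y = 0 := by linarith [hx]
    simp [hx0, hy0, Real.zero_rpow (by linarith : q ≠ 0)]
  · set S := x + y with hSdef
    have hSne : S ≠ 0 := ne_of_gt hS
    have hs : -1 ≤ -y / S := by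
      rw [neg_div, neg_le, neg_neg]
      rw [div_le_one hS]
      linarith
    have hber := one_add_mul_self_le_rpow_one_add hs hq
    have h1 : (1 : ℝ) + -y / S = x / S := by field_simp; ring
    rw [h1] at hber
    have h2 : (x / S) ^ q = x ^ q / S ^ q := Real.div_rpow hx (le_of_lt hS) q
    rw [h2] at hber
    have hSq : 0 < S ^ q := Real.rpow_pos_of_pos hS q
    have h3 : (1 + q * (-y / S)) * S ^ q ≤ x ^ q := by
      calc (1 + q * (-y / S)) * S ^ q ≤ (x ^ q / S ^ q) * S ^ q := by
            exact mul_le_mul_of_nonneg_right hber (le_of_lt hSq)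
        _ = x ^ q := by field_simp
    have h4 : S ^ (q - 1) = S ^ q / S := Real.rpow_sub_one hSne q
    have h5 : (1 + q * (-y / S)) * S ^ q = S ^ q - q * y * (S ^ q / S) := by
      field_simp; ring
    rw [h5] at h3
    rw [← h4] at h3
    linarith

/-- Bernoulli-type lower bound: for `q > 1`, `x^q + q*x^(q-1)*y ≤ (x+y)^q`. -/
lemma bern_aux {q x y : ℝ} (hq : 1 < q) (hx : 0 ≤ x) (hy : 0 ≤ y) :
    x ^ q + q * x ^ (q - 1) * y ≤ (x + y) ^ q := by
  rcases eq_or_lt_of_le hx with h | hx0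
  · subst h
    simp only [Real.zero_rpow (by linarith : q ≠ 0),
      Real.zero_rpow (by linarith : q - 1 ≠ 0), zero_add, mul_zero, zero_mul, add_zero]
    exact Real.rpow_nonneg hy q
  · have hs : (-1 : ℝ) ≤ y / x := by
      have : (0:ℝ) ≤ y / x := by positivity
      linarith
    have hber := one_add_mul_self_le_rpow_one_add hs (le_of_lt hq)
    have hxq : 0 < x ^ q := Real.rpow_pos_of_pos hx0 q
    have h1 : ((1 : ℝ) + y / x) ^ q = (x + y) ^ q / x ^ q := by
      rw [← Real.div_rpow (by positivity) (le_of_lt hx0)]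
      congr 1
      field_simp
    rw [h1] at hber
    have h3 : (1 + q * (y / x)) * x ^ q ≤ (x + y) ^ q := by
      calc (1 + q * (y / x)) * x ^ q ≤ ((x + y) ^ q / x ^ q) * x ^ q :=
            mul_le_mul_of_nonneg_right hber (le_of_lt hxq)
        _ = (x + y) ^ q := by field_simp
    have h4 : x ^ (q - 1) = x ^ q / x := Real.rpow_sub_one (ne_of_gt hx0) q
    have h5 : (1 + q * (y / x)) * x ^ q = x ^ q + q * (x ^ q / x) * y := by
      field_simp
    rw [h5, ← h4] at h3
    exact h3

/-- Key lemma in the case `b ≤ a`. -/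
lemma key_aux (p : ℝ) (hp : 3 < p) (a b : ℝ) (ha : 0 ≤ a) (hb : 0 ≤ b) (hba : b ≤ a) :
    |(a + b) ^ p - a ^ p - b ^ p - p * a ^ (p - 1) * b - p * a * b ^ (p - 1)| ≤
      (p * (p - 1) * 2 ^ (p - 2) + 1 + p) * (a ^ (p - 2) * b ^ 2) := by
  rcases eq_or_lt_of_le ha with h | ha0
  · have hb0 : b = 0 := le_antisymm (h ▸ hba) hb
    subst hb0
    rw [← h]
    simp [Real.zero_rpow (by linarith : p ≠ 0),
      Real.zero_rpow (by linarith : p - 1 ≠ 0)]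
  · -- nonneg facts
    have hap2 : (0:ℝ) ≤ a ^ (p - 2) := Real.rpow_nonneg ha _
    have hb2 : (0:ℝ) ≤ b ^ 2 := sq_nonneg b
    have h2p2 : (0:ℝ) < (2:ℝ) ^ (p - 2) := Real.rpow_pos_of_pos (by norm_num) _
    -- lower bound: E ≥ 0
    have hE0 : a ^ p + p * a ^ (p - 1) * b ≤ (a + b) ^ p :=
      bern_aux (by linarith) ha hb
    -- upper bound pieces
    have hE1 : (a + b) ^ p ≤ a ^ p + p * b * (a + b) ^ (p - 1) :=
      tangent_aux (by linarith) ha hb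
    have hE2 : (a + b) ^ (p - 1) ≤ a ^ (p - 1) + (p - 1) * b * (a + b) ^ (p - 2) := by
      have := tangent_aux (q := p - 1) (x := a) (y := b) (by linarith) ha hb
      have he : p - 1 - 1 = p - 2 := by ring
      rwa [he] at this
    have hE3 : (a + b) ^ (p - 2) ≤ 2 ^ (p - 2) * a ^ (p - 2) := by
      have h1 : (a + b) ^ (p - 2) ≤ (2 * a) ^ (p - 2) :=
        Real.rpow_le_rpow (by linarith) (by linarith) (by linarith)
      rwa [Real.mul_rpow (by norm_num) ha] at h1
    have habp : (0:ℝ) ≤ (a + b) ^ (p - 2) := Real.rpow_nonneg (by linarith) _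
    have hEub : (a + b) ^ p - a ^ p - p * a ^ (p - 1) * b ≤
        p * (p - 1) * 2 ^ (p - 2) * (a ^ (p - 2) * b ^ 2) := by
      have hstep : p * b * (a + b) ^ (p - 1) - p * a ^ (p - 1) * b ≤
          p * b * ((p - 1) * b * (a + b) ^ (p - 2)) := by
        nlinarith [mul_le_mul_of_nonneg_left hE2 (mul_nonneg (by linarith : (0:ℝ) ≤ p) hb)]
      have h6 : p * (p - 1) * b ^ 2 * (a + b) ^ (p - 2) ≤
          p * (p - 1) * b ^ 2 * (2 ^ (p - 2) * a ^ (p - 2)) :=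
        mul_le_mul_of_nonneg_left hE3
          (mul_nonneg (mul_nonneg (by linarith : (0:ℝ) ≤ p) (by linarith)) hb2)
      linarith
    -- bounds on b^p and a*b^(p-1)
    have hbp : b ^ p ≤ a ^ (p - 2) * b ^ 2 := by
      rcases eq_or_lt_of_le hb with h | hb0
      · rw [← h]
        simp [Real.zero_rpow (by linarith : p ≠ 0)]
      · have h1 : b ^ p = b ^ (p - 2) * b ^ 2 := by
          rw [← Real.rpow_natCast b 2, ← Real.rpow_add hb0]
          congr 1
          push_cast
          ring
        rw [h1]
        have h2 : b ^ (p - 2) ≤ a ^ (p - 2) :=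
          Real.rpow_le_rpow hb hba (by linarith)
        exact mul_le_mul_of_nonneg_right h2 hb2
    have habp1 : p * a * b ^ (p - 1) ≤ p * (a ^ (p - 2) * b ^ 2) := by
      rcases eq_or_lt_of_le hb with h | hb0
      · rw [← h]
        simp [Real.zero_rpow (by linarith : p - 1 ≠ 0)]
      · have h1 : b ^ (p - 1) = b ^ (p - 3) * b ^ 2 := by
          rw [← Real.rpow_natCast b 2, ← Real.rpow_add hb0]
          congr 1
          push_cast
          ring
        have h2 : b ^ (p - 3) ≤ a ^ (p - 3) :=
          Real.rpow_le_rpow hb hba (by linarith)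
        have h3 : a * a ^ (p - 3) = a ^ (p - 2) := by
          nth_rewrite 1 [← Real.rpow_one a]
          rw [← Real.rpow_add ha0]
          ring_nf
        calc p * a * b ^ (p - 1) = p * (a * b ^ (p - 3)) * b ^ 2 := by rw [h1]; ring
          _ ≤ p * (a * a ^ (p - 3)) * b ^ 2 :=
              mul_le_mul_of_nonneg_right (mul_le_mul_of_nonneg_left
                (mul_le_mul_of_nonneg_left h2 ha) (by linarith)) hb2
          _ = p * (a ^ (p - 2) * b ^ 2) := by rw [h3]; ring
    have hbpnn : (0:ℝ) ≤ b ^ p := Real.rpow_nonneg hb _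
    have habnn : (0:ℝ) ≤ p * a * b ^ (p - 1) := by
      have := Real.rpow_nonneg hb (p - 1); positivity
    rw [abs_le]
    constructor
    · nlinarith [mul_nonneg hap2 hb2]
    · nlinarith [mul_nonneg hap2 hb2, mul_pos (mul_pos (by linarith : (0:ℝ) < p)
        (by linarith : (0:ℝ) < p - 1)) h2p2]

theorem stmt2 (p : ℝ) (hp : 3 < p) :
    ∃ C : ℝ, 0 < C ∧ ∀ a b : ℝ, 0 ≤ a → 0 ≤ b →
      |(a + b) ^ p - a ^ p - b ^ p - p * a ^ (p - 1) * b - p * a * b ^ (p - 1)| ≤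
        C * (a ^ (p - 2) * b ^ 2 + a ^ 2 * b ^ (p - 2)) := by
  refine ⟨p * (p - 1) * 2 ^ (p - 2) + 1 + p, ?_, ?_⟩
  · have h2p2 : (0:ℝ) < (2:ℝ) ^ (p - 2) := Real.rpow_pos_of_pos (by norm_num) _
    have := mul_pos (mul_pos (by linarith : (0:ℝ) < p) (by linarith : (0:ℝ) < p - 1)) h2p2
    linarith
  · intro a b ha hb
    have hCpos : (0:ℝ) ≤ p * (p - 1) * 2 ^ (p - 2) + 1 + p := by
      have h2p2 : (0:ℝ) < (2:ℝ) ^ (p - 2) := Real.rpow_pos_of_pos (by norm_num) _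
      have := mul_pos (mul_pos (by linarith : (0:ℝ) < p) (by linarith : (0:ℝ) < p - 1)) h2p2
      linarith
    rcases le_total b a with hba | hab
    · have h := key_aux p hp a b ha hb hba
      have hnn : (0:ℝ) ≤ a ^ 2 * b ^ (p - 2) := by
        have := Real.rpow_nonneg hb (p - 2); positivity
      nlinarith [mul_nonneg hCpos hnn]
    · have h := key_aux p hp b a hb ha hab
      have heq : (b + a) ^ p - b ^ p - a ^ p - p * b ^ (p - 1) * a - p * b * a ^ (p - 1)
          = (a + b) ^ p - a ^ p - b ^ p - p * a ^ (p - 1) * b - p * a * b ^ (p - 1) := by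
        rw [add_comm b a]; ring
      rw [heq] at h
      have hnn : (0:ℝ) ≤ a ^ (p - 2) * b ^ 2 := by
        have := Real.rpow_nonneg ha (p - 2); positivity
      have heq2 : b ^ (p - 2) * a ^ 2 = a ^ 2 * b ^ (p - 2) := by ring
      rw [heq2] at h
      nlinarith [mul_nonneg hCpos hnn]
end

section
/- Let m > 1 be real and set m* = min{m, 2}. There exists a constant C > 0 (depending only on m) such that for all real numbers a and b one has | |a+b|^m - |a|^m - m |a|^{m-2} a b | ≤ C ( |a|^{m-m*} |b|^{m*} + |b|^m ). -/
open Real Set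

-- core Taylor estimate for positive a, small b
lemma core_taylor (m : ℝ) (hm : 1 < m) (a b : ℝ) (ha : 0 < a) (hb : |b| ≤ a / 2) :
    |(a + b) ^ m - a ^ m - m * a ^ (m - 1) * b| ≤
      m * (m - 1) * max ((a / 2) ^ (m - 2)) ((3 * a / 2) ^ (m - 2)) * b ^ 2 := by
  have hb1 := (abs_le.mp hb).1
  have hb2 := (abs_le.mp hb).2
  set M := max ((a / 2) ^ (m - 2)) ((3 * a / 2) ^ (m - 2)) with hMdef
  have hM0 : 0 ≤ M := le_max_of_le_left (Real.rpow_nonneg (by linarith) _)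
  set s : Set ℝ := Set.Icc (a / 2) (3 * a / 2) with hsdef
  have hconv : Convex ℝ s := convex_Icc _ _
  have hpos : ∀ t ∈ s, 0 < t := fun t ht => lt_of_lt_of_le (by linarith) ht.1
  have hpow : ∀ t ∈ s, t ^ (m - 2) ≤ M := by
    intro t ht
    rcases le_or_gt 2 m with h2 | h2
    · exact le_max_of_le_right (Real.rpow_le_rpow (le_of_lt (hpos t ht)) ht.2 (by linarith))
    · exact le_max_of_le_left (Real.rpow_le_rpow_of_nonpos (by linarith) ht.1 (by linarith))
  -- Lipschitz bound for t ^ (m-1) on s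
  have lip : ∀ x ∈ s, ∀ y ∈ s, |y ^ (m - 1) - x ^ (m - 1)| ≤ (m - 1) * M * |y - x| := by
    intro x hx y hy
    have h := hconv.norm_image_sub_le_of_norm_hasDerivWithin_le
      (f := fun t => t ^ (m - 1)) (f' := fun t => (m - 1) * t ^ (m - 2)) (C := (m - 1) * M)
      (fun t ht => by
        have h := Real.hasDerivAt_rpow_const (x := t) (p := m - 1)
          (Or.inl (ne_of_gt (hpos t ht)))
        have he : m - 1 - 1 = m - 2 := by ring
        rw [he] at h
        exact h.hasDerivWithinAt)
      (fun t ht => by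
        rw [Real.norm_eq_abs, abs_of_nonneg (mul_nonneg (by linarith)
          (Real.rpow_nonneg (hpos t ht).le _))]
        exact mul_le_mul_of_nonneg_left (hpow t ht) (by linarith)) hx hy
    simpa [Real.norm_eq_abs] using h
  have hmem_a : a ∈ s := ⟨by linarith, by linarith⟩
  have hmem_ab : a + b ∈ s := ⟨by linarith, by linarith⟩
  have hsub : Set.uIcc a (a + b) ⊆ s := by
    intro t ht
    rcases Set.mem_uIcc.mp ht with ⟨h1, h2⟩ | ⟨h1, h2⟩ <;> exact ⟨by linarith, by linarith⟩
  have key2 := (convex_uIcc a (a + b)).norm_image_sub_le_of_norm_hasDerivWithin_le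
    (f := fun t => t ^ m - m * a ^ (m - 1) * t)
    (f' := fun t => m * t ^ (m - 1) - m * a ^ (m - 1)) (C := m * ((m - 1) * M * |b|))
    (fun t ht => by
      have h1 := Real.hasDerivAt_rpow_const (x := t) (p := m)
        (Or.inl (ne_of_gt (hpos t (hsub ht))))
      have h2 : HasDerivAt (fun t : ℝ => m * a ^ (m - 1) * t) (m * a ^ (m - 1)) t := by
        simpa using (hasDerivAt_id t).const_mul (m * a ^ (m - 1))
      exact (h1.sub h2).hasDerivWithinAt)
    (fun t ht => by
      have hta : |t - a| ≤ |b| := by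
        rcases Set.mem_uIcc.mp ht with ⟨h1, h2⟩ | ⟨h1, h2⟩ <;>
          rw [abs_le] <;> constructor <;>
          nlinarith [le_abs_self b, neg_abs_le b]
      have hlip := lip a hmem_a t (hsub ht)
      show ‖m * t ^ (m - 1) - m * a ^ (m - 1)‖ ≤ m * ((m - 1) * M * |b|)
      rw [Real.norm_eq_abs, show m * t ^ (m - 1) - m * a ^ (m - 1)
        = m * (t ^ (m - 1) - a ^ (m - 1)) from by ring, abs_mul,
        abs_of_nonneg (by linarith : (0:ℝ) ≤ m)]
      have : |t ^ (m - 1) - a ^ (m - 1)| ≤ (m - 1) * M * |b| := by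
        calc |t ^ (m - 1) - a ^ (m - 1)| ≤ (m - 1) * M * |t - a| := hlip
          _ ≤ (m - 1) * M * |b| := by
              exact mul_le_mul_of_nonneg_left hta (mul_nonneg (by linarith) hM0)
      exact mul_le_mul_of_nonneg_left this (by linarith))
    Set.left_mem_uIcc Set.right_mem_uIcc
  rw [Real.norm_eq_abs, Real.norm_eq_abs] at key2
  calc |(a + b) ^ m - a ^ m - m * a ^ (m - 1) * b|
      = |(a + b) ^ m - m * a ^ (m - 1) * (a + b) - (a ^ m - m * a ^ (m - 1) * a)| := by
        ring_nf
    _ ≤ m * ((m - 1) * M * |b|) * |a + b - a| := key2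
    _ = m * (m - 1) * M * b ^ 2 := by
        rw [show a + b - a = b from by ring]
        rw [show m * ((m - 1) * M * |b|) * |b| = m * (m - 1) * M * (|b| * |b|) from by ring,
          abs_mul_abs_self, sq]

open Real Set

set_option maxHeartbeats 1000000 in
lemma key_pos (m : ℝ) (hm : 1 < m) (a b : ℝ) (ha : 0 < a) (hb0 : b ≠ 0)
    (core : |b| ≤ a / 2 → |(a + b) ^ m - a ^ m - m * a ^ (m - 1) * b| ≤
      m * (m - 1) * max ((a / 2) ^ (m - 2)) ((3 * a / 2) ^ (m - 2)) * b ^ 2) :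
    |(|a + b| ^ m - |a| ^ m - m * |a| ^ (m - 2) * a * b)| ≤
      (3 ^ m + 2 ^ m + m * 2 ^ m + m * m * 2 ^ m + m * m + 1) *
        (|a| ^ (m - min m 2) * |b| ^ (min m 2) + |b| ^ m) := by
  have hbpos : 0 < |b| := abs_pos.mpr hb0
  set C : ℝ := 3 ^ m + 2 ^ m + m * 2 ^ m + m * m * 2 ^ m + m * m + 1 with hC
  clear_value C
  have h3m : (0:ℝ) < 3 ^ m := Real.rpow_pos_of_pos (by norm_num) m
  have h2m : (0:ℝ) < 2 ^ m := Real.rpow_pos_of_pos (by norm_num) m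
  have hm2m : (0:ℝ) < m * 2 ^ m := mul_pos (by linarith) h2m
  have hmm : (0:ℝ) < m * m := mul_pos (by linarith) (by linarith)
  have hmm2m : (0:ℝ) < m * m * 2 ^ m := mul_pos hmm h2m
  have hC0 : (0:ℝ) < C := by rw [hC]; nlinarith
  have hbm : (0:ℝ) ≤ |b| ^ m := Real.rpow_nonneg (abs_nonneg b) m
  rw [abs_of_pos ha]
  have hea : a ^ (m - 2) * a = a ^ (m - 1) := by
    have h := Real.rpow_add ha (m - 2) 1
    rw [Real.rpow_one] at h
    rw [← h, show m - 2 + 1 = m - 1 from by ring]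
  have hpow1 : m * a ^ (m - 2) * a * b = m * a ^ (m - 1) * b := by
    rw [show m * a ^ (m - 2) * a * b = m * (a ^ (m - 2) * a) * b from by ring, hea]
  rw [hpow1]
  rcases lt_or_ge (|b|) (a / 2) with hsmall | hbig
  · -- small b
    have hb1 := (abs_le.mp hsmall.le).1
    have hb2 := (abs_le.mp hsmall.le).2
    have hab : 0 < a + b := by linarith
    rw [abs_of_pos hab]
    have hb2r : |b| ^ (2:ℝ) = b ^ 2 := by
      rw [show (2:ℝ) = ((2:ℕ):ℝ) from by norm_num, Real.rpow_natCast, sq_abs]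
    have hb2nn : (0:ℝ) ≤ b ^ 2 := sq_nonneg b
    rcases le_or_gt 2 m with h2 | h2
    · -- m ≥ 2
      rw [min_eq_right h2]
      have hMle : max ((a / 2) ^ (m - 2)) ((3 * a / 2) ^ (m - 2)) ≤ (3 * a / 2) ^ (m - 2) :=
        max_le (Real.rpow_le_rpow (by linarith) (by linarith) (by linarith)) le_rfl
      have hsplit : (3 * a / 2) ^ (m - 2) = (3 / 2) ^ (m - 2) * a ^ (m - 2) := by
        rw [show 3 * a / 2 = (3 / 2) * a from by ring, Real.mul_rpow (by norm_num) ha.le]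
      have h32 : ((3:ℝ) / 2) ^ (m - 2) ≤ 2 ^ m :=
        (Real.rpow_le_rpow_of_exponent_le (by norm_num) (by linarith)).trans
          (Real.rpow_le_rpow (by norm_num) (by norm_num) (by linarith))
      have ham2 : (0:ℝ) < a ^ (m - 2) := Real.rpow_pos_of_pos ha _
      have hc1 : m * m * 2 ^ m ≤ C := by rw [hC]; nlinarith
      calc |(a + b) ^ m - a ^ m - m * a ^ (m - 1) * b|
          ≤ m * (m - 1) * max ((a / 2) ^ (m - 2)) ((3 * a / 2) ^ (m - 2)) * b ^ 2 :=
            core hsmall.le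
        _ ≤ m * (m - 1) * ((3 / 2) ^ (m - 2) * a ^ (m - 2)) * b ^ 2 := by
            rw [← hsplit]; gcongr <;> nlinarith
        _ ≤ m * m * (2 ^ m * a ^ (m - 2)) * b ^ 2 := by
            gcongr <;> first
              | exact h32
              | positivity
              | nlinarith
        _ = m * m * 2 ^ m * (a ^ (m - 2) * b ^ 2) := by ring
        _ ≤ C * (a ^ (m - 2) * b ^ 2) :=
            mul_le_mul_of_nonneg_right hc1 (mul_nonneg ham2.le hb2nn)
        _ ≤ C * (a ^ (m - 2) * |b| ^ (2:ℝ) + |b| ^ m) := by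
            rw [hb2r]
            exact mul_le_mul_of_nonneg_left (le_add_of_nonneg_right hbm) hC0.le
    · -- m < 2
      rw [min_eq_left h2.le, show m - m = (0:ℝ) from by ring, Real.rpow_zero, one_mul]
      have hMle : max ((a / 2) ^ (m - 2)) ((3 * a / 2) ^ (m - 2)) ≤ (a / 2) ^ (m - 2) :=
        max_le le_rfl (Real.rpow_le_rpow_of_nonpos (by linarith) (by linarith) (by linarith))
      have h3 : (a / 2) ^ (m - 2) ≤ |b| ^ (m - 2) :=
        Real.rpow_le_rpow_of_nonpos hbpos hsmall.le (by linarith)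
      have h4 : |b| ^ (m - 2) * b ^ 2 = |b| ^ m := by
        rw [← hb2r, ← Real.rpow_add hbpos]; norm_num
      have e5 : m * (m - 1) ≤ m * m := by nlinarith
      have hCge : m * (m - 1) ≤ 2 * C := by rw [hC]; linarith
      calc |(a + b) ^ m - a ^ m - m * a ^ (m - 1) * b|
          ≤ m * (m - 1) * max ((a / 2) ^ (m - 2)) ((3 * a / 2) ^ (m - 2)) * b ^ 2 :=
            core hsmall.le
        _ ≤ m * (m - 1) * (|b| ^ (m - 2)) * b ^ 2 := by
            have h5 : (0:ℝ) ≤ m * (m - 1) := by nlinarith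
            exact mul_le_mul_of_nonneg_right
              (mul_le_mul_of_nonneg_left (hMle.trans h3) h5) hb2nn
        _ = m * (m - 1) * |b| ^ m := by rw [mul_assoc, h4]
        _ ≤ 2 * C * |b| ^ m := mul_le_mul_of_nonneg_right hCge hbm
        _ = C * (|b| ^ m + |b| ^ m) := by ring
  · -- big b : a ≤ 2|b|
    have ha2b : a ≤ 2 * |b| := by linarith
    have hX0 : (0:ℝ) ≤ |a + b| ^ m := Real.rpow_nonneg (abs_nonneg _) m
    have hY0 : (0:ℝ) ≤ a ^ m := Real.rpow_nonneg ha.le m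
    have habs : |a + b| ≤ 3 * |b| := by
      calc |a + b| ≤ |a| + |b| := abs_add_le a b
        _ ≤ 3 * |b| := by rw [abs_of_pos ha]; linarith
    have e1 : |a + b| ^ m ≤ 3 ^ m * |b| ^ m := by
      calc |a + b| ^ m ≤ (3 * |b|) ^ m :=
            Real.rpow_le_rpow (abs_nonneg _) habs (by linarith)
        _ = 3 ^ m * |b| ^ m := Real.mul_rpow (by norm_num) (abs_nonneg b)
    have e2 : a ^ m ≤ 2 ^ m * |b| ^ m := by
      calc a ^ m ≤ (2 * |b|) ^ m := Real.rpow_le_rpow ha.le ha2b (by linarith)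
        _ = 2 ^ m * |b| ^ m := Real.mul_rpow (by norm_num) (abs_nonneg b)
    have hbm1 : |b| ^ (m - 1) * |b| = |b| ^ m := by
      have h := Real.rpow_add hbpos (m - 1) 1
      rw [Real.rpow_one] at h
      rw [← h, show m - 1 + 1 = m from by ring]
    have ham1 : (0:ℝ) ≤ a ^ (m - 1) := Real.rpow_nonneg ha.le _
    have e3 : m * a ^ (m - 1) * |b| ≤ m * 2 ^ m * |b| ^ m := by
      have ha1 : a ^ (m - 1) ≤ 2 ^ (m - 1) * |b| ^ (m - 1) := by
        calc a ^ (m - 1) ≤ (2 * |b|) ^ (m - 1) :=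
              Real.rpow_le_rpow ha.le ha2b (by linarith)
          _ = 2 ^ (m - 1) * |b| ^ (m - 1) := Real.mul_rpow (by norm_num) (abs_nonneg b)
      have h2e : (2:ℝ) ^ (m - 1) ≤ 2 ^ m :=
        Real.rpow_le_rpow_of_exponent_le (by norm_num) (by linarith)
      calc m * a ^ (m - 1) * |b| ≤ m * (2 ^ (m - 1) * |b| ^ (m - 1)) * |b| := by
            gcongr
        _ = m * 2 ^ (m - 1) * (|b| ^ (m - 1) * |b|) := by ring
        _ = m * 2 ^ (m - 1) * |b| ^ m := by rw [hbm1]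
        _ ≤ m * 2 ^ m * |b| ^ m := by gcongr
    have hZ : |m * a ^ (m - 1) * b| = m * a ^ (m - 1) * |b| := by
      rw [abs_mul, abs_of_nonneg (mul_nonneg (by linarith : (0:ℝ) ≤ m) ham1)]
    have htri : |(|a + b|) ^ m - a ^ m - m * a ^ (m - 1) * b|
        ≤ |a + b| ^ m + a ^ m + m * a ^ (m - 1) * |b| := by
      have h1 := le_abs_self (m * a ^ (m - 1) * b)
      have h2 := neg_abs_le (m * a ^ (m - 1) * b)
      rw [abs_le]
      constructor <;> linarith [h1, h2, hZ, hX0, hY0]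
    have hT : (0:ℝ) ≤ a ^ (m - min m 2) * |b| ^ (min m 2) :=
      mul_nonneg (Real.rpow_nonneg ha.le _) (Real.rpow_nonneg (abs_nonneg b) _)
    have hCge : 3 ^ m + 2 ^ m + m * 2 ^ m ≤ C := by rw [hC]; linarith
    calc |(|a + b|) ^ m - a ^ m - m * a ^ (m - 1) * b|
        ≤ |a + b| ^ m + a ^ m + m * a ^ (m - 1) * |b| := htri
      _ ≤ 3 ^ m * |b| ^ m + 2 ^ m * |b| ^ m + m * 2 ^ m * |b| ^ m := by linarith
      _ = (3 ^ m + 2 ^ m + m * 2 ^ m) * |b| ^ m := by ring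
      _ ≤ C * |b| ^ m := mul_le_mul_of_nonneg_right hCge hbm
      _ ≤ C * (a ^ (m - min m 2) * |b| ^ (min m 2) + |b| ^ m) :=
          mul_le_mul_of_nonneg_left (le_add_of_nonneg_left hT) hC0.le

set_option maxHeartbeats 1000000 in
theorem stmt3 (m : ℝ) (hm : 1 < m) :
    ∃ C : ℝ, 0 < C ∧ ∀ a b : ℝ,
      |(|a + b| ^ m - |a| ^ m - m * |a| ^ (m - 2) * a * b)| ≤
        C * (|a| ^ (m - min m 2) * |b| ^ (min m 2) + |b| ^ m) := by
  have h3m : (0:ℝ) < 3 ^ m := Real.rpow_pos_of_pos (by norm_num) m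
  have h2m : (0:ℝ) < 2 ^ m := Real.rpow_pos_of_pos (by norm_num) m
  have hm2m : (0:ℝ) < m * 2 ^ m := mul_pos (by linarith) h2m
  have hmm : (0:ℝ) < m * m := mul_pos (by linarith) (by linarith)
  have hmm2m : (0:ℝ) < m * m * 2 ^ m := mul_pos hmm h2m
  refine ⟨3 ^ m + 2 ^ m + m * 2 ^ m + m * m * 2 ^ m + m * m + 1, by linarith, ?_⟩
  have hC0 : (0:ℝ) < 3 ^ m + 2 ^ m + m * 2 ^ m + m * m * 2 ^ m + m * m + 1 := by linarith
  have hkey : ∀ a b : ℝ, 0 < a → b ≠ 0 →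
      |(|a + b| ^ m - |a| ^ m - m * |a| ^ (m - 2) * a * b)| ≤
        (3 ^ m + 2 ^ m + m * 2 ^ m + m * m * 2 ^ m + m * m + 1) *
          (|a| ^ (m - min m 2) * |b| ^ (min m 2) + |b| ^ m) := by
    intro a b ha hb0
    exact key_pos m hm a b ha hb0 (fun h => core_taylor m hm a b ha h)
  intro a b
  rcases eq_or_ne b 0 with rfl | hb0
  · have h0 : |a + 0| ^ m - |a| ^ m - m * |a| ^ (m - 2) * a * 0 = 0 := by
      rw [add_zero, mul_zero]; ring
    rw [h0, abs_zero]
    have hT : (0:ℝ) ≤ |a| ^ (m - min m 2) * |(0:ℝ)| ^ (min m 2) :=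
      mul_nonneg (Real.rpow_nonneg (abs_nonneg a) _) (Real.rpow_nonneg (abs_nonneg _) _)
    have hbm : (0:ℝ) ≤ |(0:ℝ)| ^ m := Real.rpow_nonneg (abs_nonneg _) m
    positivity
  · rcases lt_trichotomy a 0 with ha | rfl | ha
    · have h := hkey (-a) (-b) (by linarith) (neg_ne_zero.mpr hb0)
      have e1 : -a + -b = -(a + b) := by ring
      rw [e1, abs_neg, abs_neg, abs_neg] at h
      calc |(|a + b| ^ m - |a| ^ m - m * |a| ^ (m - 2) * a * b)|
          = |(|a + b| ^ m - |a| ^ m - m * |a| ^ (m - 2) * -a * -b)| := by ring_nf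
        _ ≤ _ := h
    · have hbm : (0:ℝ) ≤ |b| ^ m := Real.rpow_nonneg (abs_nonneg b) m
      have hT : (0:ℝ) ≤ |(0:ℝ) + b| ^ (m - min m 2) * 0 := by simp
      have h0 : |(0:ℝ)| ^ m = 0 := by
        rw [abs_zero, Real.zero_rpow (by linarith : m ≠ 0)]
      have hgoal : |(|(0:ℝ) + b| ^ m - |(0:ℝ)| ^ m - m * |(0:ℝ)| ^ (m - 2) * 0 * b)|
          = |b| ^ m := by
        rw [zero_add, h0, mul_zero, zero_mul, sub_zero, sub_zero]
        exact abs_of_nonneg hbm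
      rw [hgoal]
      have hT2 : (0:ℝ) ≤ |(0:ℝ)| ^ (m - min m 2) * |b| ^ (min m 2) :=
        mul_nonneg (Real.rpow_nonneg (abs_nonneg _) _) (Real.rpow_nonneg (abs_nonneg b) _)
      nlinarith [mul_nonneg (le_of_lt hC0) hT2, mul_nonneg (le_of_lt hC0) hbm]
    · exact hkey a b ha hb0
end

section
/- Let m > 1 and let w : ℝ → [0, ∞) be measurable with 0 < ∫_ℝ w < ∞ and with ∫_ℝ |s|^{m-1} w(s) ds < ∞, and suppose w is even (w(-s) = w(s)). Define F(t) = ∫_ℝ |s + t|^{m-2}(s + t) w(s) ds for t ∈ ℝ (with |r|^{m-2} r := 0 at r = 0). Then F(t) = 0 if and only if t = 0. -/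
open MeasureTheory

noncomputable def gfun (m r : ℝ) : ℝ := |r| ^ (m - 2) * r

lemma gfun_of_nonneg (m : ℝ) (hm : 1 < m) {r : ℝ} (hr : 0 ≤ r) :
    gfun m r = r ^ (m - 1) := by
  rcases hr.eq_or_lt with h | h
  · simp [gfun, ← h, Real.zero_rpow (show m - 1 ≠ 0 by intro hh; linarith)]
  · rw [gfun, abs_of_pos h, show m - 1 = (m - 2) + 1 by ring, Real.rpow_add_one h.ne']

lemma gfun_neg (m r : ℝ) : gfun m (-r) = -gfun m r := by
  simp [gfun]

lemma abs_gfun (m : ℝ) (hm : 1 < m) (r : ℝ) : |gfun m r| = |r| ^ (m - 1) := by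
  rcases eq_or_ne r 0 with h | h
  · simp [gfun, h, Real.zero_rpow (show m - 1 ≠ 0 by intro hh; linarith)]
  · rw [gfun, abs_mul, abs_of_nonneg (Real.rpow_nonneg (abs_nonneg r) _),
      show m - 1 = (m - 2) + 1 by ring, Real.rpow_add_one (abs_ne_zero.2 h)]

lemma gfun_strictMono (m : ℝ) (hm : 1 < m) : StrictMono (gfun m) := by
  intro a b hab
  have hm1 : (0 : ℝ) < m - 1 := by linarith
  have hneg : ∀ r : ℝ, r ≤ 0 → gfun m r = -((-r) ^ (m - 1)) := by
    intro r hr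
    have h1 : gfun m (-(-r)) = -gfun m (-r) := gfun_neg m (-r)
    rw [neg_neg] at h1
    rw [h1, gfun_of_nonneg m hm (by linarith : (0 : ℝ) ≤ -r)]
  rcases le_or_gt 0 a with ha | ha
  · rw [gfun_of_nonneg m hm ha, gfun_of_nonneg m hm (ha.trans hab.le)]
    exact Real.rpow_lt_rpow ha hab hm1
  · rcases le_or_gt b 0 with hb | hb
    · rw [hneg a ha.le, hneg b hb]
      have : (-b) ^ (m - 1) < (-a) ^ (m - 1) :=
        Real.rpow_lt_rpow (by linarith) (by linarith) hm1
      linarith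
    · have h1 : gfun m a < 0 := by
        rw [hneg a ha.le]
        have : (0 : ℝ) < (-a) ^ (m - 1) := Real.rpow_pos_of_pos (by linarith) _
        linarith
      have h2 : (0 : ℝ) < gfun m b := by
        rw [gfun_of_nonneg m hm hb.le]
        exact Real.rpow_pos_of_pos hb _
      linarith

lemma gfun_measurable (m : ℝ) : Measurable (gfun m) := by
  unfold gfun; measurability

lemma integrable_gfun_shift (m : ℝ) (hm : 1 < m) (w : ℝ → ℝ)
    (hw_meas : Measurable w) (hw_nonneg : ∀ s, 0 ≤ w s)
    (hw_int : Integrable w)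
    (hw_mom : Integrable (fun s => |s| ^ (m - 1) * w s)) (t : ℝ) :
    Integrable (fun s => gfun m (s + t) * w s) := by
  have hm1 : (0 : ℝ) < m - 1 := by linarith
  have hmeas : Measurable fun s => gfun m (s + t) * w s :=
    ((gfun_measurable m).comp (measurable_id.add_const t)).mul hw_meas
  apply Integrable.mono'
    (g := fun s => 2 ^ (m - 1) * (|s| ^ (m - 1) * w s) + (2 ^ (m - 1) * |t| ^ (m - 1)) * w s)
    ((hw_mom.const_mul _).add (hw_int.const_mul _)) hmeas.aestronglyMeasurable
  filter_upwards with s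
  have hb : |s + t| ^ (m - 1) ≤ 2 ^ (m - 1) * (|s| ^ (m - 1) + |t| ^ (m - 1)) := by
    have h1 : |s + t| ≤ 2 * max |s| |t| := by
      refine (abs_add_le s t).trans ?_
      have := le_max_left |s| |t|
      have := le_max_right |s| |t|
      linarith
    have h2 : |s + t| ^ (m - 1) ≤ (2 * max |s| |t|) ^ (m - 1) :=
      Real.rpow_le_rpow (abs_nonneg _) h1 hm1.le
    have h3 : (2 * max |s| |t|) ^ (m - 1) = 2 ^ (m - 1) * (max |s| |t|) ^ (m - 1) :=
      Real.mul_rpow (by norm_num) (le_max_of_le_left (abs_nonneg s))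
    have h4 : (max |s| |t|) ^ (m - 1) ≤ |s| ^ (m - 1) + |t| ^ (m - 1) := by
      rcases max_cases |s| |t| with ⟨hmax, _⟩ | ⟨hmax, _⟩ <;> rw [hmax]
      · have : (0 : ℝ) ≤ |t| ^ (m - 1) := Real.rpow_nonneg (abs_nonneg t) _
        linarith
      · have : (0 : ℝ) ≤ |s| ^ (m - 1) := Real.rpow_nonneg (abs_nonneg s) _
        linarith
    have h5 : (0 : ℝ) ≤ (2 : ℝ) ^ (m - 1) := Real.rpow_nonneg (by norm_num) _
    calc |s + t| ^ (m - 1) ≤ 2 ^ (m - 1) * (max |s| |t|) ^ (m - 1) := by rw [← h3]; exact h2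
      _ ≤ 2 ^ (m - 1) * (|s| ^ (m - 1) + |t| ^ (m - 1)) := by
          exact mul_le_mul_of_nonneg_left h4 h5
  have : ‖gfun m (s + t) * w s‖ = |s + t| ^ (m - 1) * w s := by
    rw [Real.norm_eq_abs, abs_mul, abs_gfun m hm, abs_of_nonneg (hw_nonneg s)]
  rw [this]
  have := mul_le_mul_of_nonneg_right hb (hw_nonneg s)
  nlinarith [hw_nonneg s, Real.rpow_nonneg (abs_nonneg t) (m - 1),
    Real.rpow_nonneg (abs_nonneg s) (m - 1), Real.rpow_nonneg (show (0:ℝ) ≤ 2 by norm_num) (m - 1)]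

theorem stmt7 (m : ℝ) (hm : 1 < m) (w : ℝ → ℝ)
    (hw_meas : Measurable w) (hw_nonneg : ∀ s, 0 ≤ w s)
    (hw_int : Integrable w) (hw_pos : 0 < ∫ s, w s)
    (hw_mom : Integrable (fun s => |s| ^ (m - 1) * w s))
    (hw_even : ∀ s, w (-s) = w s) (t : ℝ) :
    (∫ s, |s + t| ^ (m - 2) * (s + t) * w s) = 0 ↔ t = 0 := by
  have hint : ∀ u : ℝ, Integrable (fun s => gfun m (s + u) * w s) := fun u =>
    integrable_gfun_shift m hm w hw_meas hw_nonneg hw_int hw_mom u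
  -- F(0) = 0
  have h0 : (∫ s, gfun m (s + 0) * w s) = 0 := by
    simp only [add_zero]
    have hcomp : (∫ s, gfun m (-s) * w (-s)) = ∫ s, gfun m s * w s :=
      integral_neg_eq_self (fun s => gfun m s * w s) MeasureTheory.volume
    have heq : (fun s => gfun m (-s) * w (-s)) = fun s => -(gfun m s * w s) := by
      funext s; rw [gfun_neg, hw_even]; ring
    rw [heq, integral_neg] at hcomp
    linarith
  -- F strict mono
  have hmono : StrictMono (fun u : ℝ => ∫ s, gfun m (s + u) * w s) := by
    intro t1 t2 h12
    have hsupp : 0 < MeasureTheory.volume (Function.support w) := by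
      rw [← integral_pos_iff_support_of_nonneg hw_nonneg hw_int]
      exact hw_pos
    have hnn : ∀ s, 0 ≤ (gfun m (s + t2) - gfun m (s + t1)) * w s := fun s =>
      mul_nonneg (sub_nonneg.2 (gfun_strictMono m hm (by linarith : s + t1 < s + t2)).le)
        (hw_nonneg s)
    have hintd : Integrable (fun s => (gfun m (s + t2) - gfun m (s + t1)) * w s) := by
      have := (hint t2).sub (hint t1)
      simpa [sub_mul, Pi.sub_def] using this
    have hsupp_eq : Function.support (fun s => (gfun m (s + t2) - gfun m (s + t1)) * w s)
        = Function.support w := by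
      ext s
      simp only [Function.mem_support, mul_ne_zero_iff]
      constructor
      · rintro ⟨_, h⟩; exact h
      · intro h
        refine ⟨?_, h⟩
        have := gfun_strictMono m hm (show s + t1 < s + t2 by linarith)
        intro hc; rw [sub_eq_zero] at hc; exact absurd hc (ne_of_gt this)
    have hpos : 0 < ∫ s, (gfun m (s + t2) - gfun m (s + t1)) * w s := by
      rw [integral_pos_iff_support_of_nonneg hnn hintd, hsupp_eq]
      exact hsupp
    have hsub : (∫ s, (gfun m (s + t2) - gfun m (s + t1)) * w s)
        = (∫ s, gfun m (s + t2) * w s) - ∫ s, gfun m (s + t1) * w s := by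
      rw [← integral_sub (hint t2) (hint t1)]
      congr 1; funext s; ring
    simp only
    linarith [hsub ▸ hpos]
  have hF : (∫ s, |s + t| ^ (m - 2) * (s + t) * w s) = ∫ s, gfun m (s + t) * w s := rfl
  rw [hF]
  constructor
  · intro h
    by_contra ht
    rcases lt_or_gt_of_ne ht with hlt | hgt
    · have := hmono (show t < 0 from hlt)
      simp only at this
      rw [h0] at this
      linarith [h ▸ this]
    · have := hmono (show (0:ℝ) < t from hgt)
      simp only at this
      rw [h0] at this
      linarith [h ▸ this]
  · intro h; subst h; exact h0
end

section
/- Let A₀, A₁, A₂, u : ℝ² → ℝ be C² functions satisfying ∂₁A₀ = A₂ u², ∂₂A₀ = -A₁ u², and ∂₁A₁ + ∂₂A₂ = 0. Then u · (A₁ ∂₁u + A₂ ∂₂u) = 0 everywhere on ℝ². In particular, on the open set where u ≠ 0, one has A₁ ∂₁u + A₂ ∂₂u = 0. -/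
/-- Partial derivative in the `k`-th coordinate direction in `ℝ²`
(`pd 0` is `∂₁`, `pd 1` is `∂₂`). -/
noncomputable def pd (k : Fin 2) (f : EuclideanSpace ℝ (Fin 2) → ℝ)
    (x : EuclideanSpace ℝ (Fin 2)) : ℝ :=
  fderiv ℝ f x (EuclideanSpace.single k 1)

private lemma pd_mul (g h : EuclideanSpace ℝ (Fin 2) → ℝ)
    (k : Fin 2) (x : EuclideanSpace ℝ (Fin 2))
    (hg : DifferentiableAt ℝ g x) (hh : DifferentiableAt ℝ h x) :
    pd k (fun y => g y * h y) x = g x * pd k h x + h x * pd k g x := by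
  unfold pd
  rw [fderiv_fun_mul hg hh]
  simp

private lemma pd_neg (g : EuclideanSpace ℝ (Fin 2) → ℝ)
    (k : Fin 2) (x : EuclideanSpace ℝ (Fin 2)) :
    pd k (fun y => -(g y)) x = -(pd k g x) := by
  unfold pd
  rw [fderiv_fun_neg]
  simp

private lemma pd_comm (f : EuclideanSpace ℝ (Fin 2) → ℝ)
    (hf : ContDiff ℝ 2 f) (i j : Fin 2) (x : EuclideanSpace ℝ (Fin 2)) :
    pd i (pd j f) x = pd j (pd i f) x := by
  have hd : DifferentiableAt ℝ (fderiv ℝ f) x :=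
    ((hf.fderiv_right (m := 1) (by norm_num)).differentiable (by norm_num)).differentiableAt
  have e : ∀ k l : Fin 2, pd k (pd l f) x =
      (fderiv ℝ (fderiv ℝ f) x (EuclideanSpace.single k 1)) (EuclideanSpace.single l 1) := by
    intro k l
    unfold pd
    rw [fderiv_clm_apply hd (differentiableAt_const _)]
    simp
  rw [e, e]
  exact (hf.contDiffAt.isSymmSndFDerivAt (by norm_num)) _ _

theorem stmt12 (A₀ A₁ A₂ u : EuclideanSpace ℝ (Fin 2) → ℝ)
    (hA₀ : ContDiff ℝ 2 A₀) (hA₁ : ContDiff ℝ 2 A₁) (hA₂ : ContDiff ℝ 2 A₂)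
    (hu : ContDiff ℝ 2 u)
    (h1 : ∀ x, pd 0 A₀ x = A₂ x * u x ^ 2)
    (h2 : ∀ x, pd 1 A₀ x = -(A₁ x * u x ^ 2))
    (h3 : ∀ x, pd 0 A₁ x + pd 1 A₂ x = 0) :
    (∀ x, u x * (A₁ x * pd 0 u x + A₂ x * pd 1 u x) = 0) ∧
      ∀ x, u x ≠ 0 → A₁ x * pd 0 u x + A₂ x * pd 1 u x = 0 := by
  have hud : Differentiable ℝ u := hu.differentiable (by norm_num)
  have h1d : Differentiable ℝ A₁ := hA₁.differentiable (by norm_num)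
  have h2d : Differentiable ℝ A₂ := hA₂.differentiable (by norm_num)
  have key : ∀ x, u x * (A₁ x * pd 0 u x + A₂ x * pd 1 u x) = 0 := by
    intro x
    have comm := pd_comm A₀ hA₀ 1 0 x
    have e1 : pd 0 A₀ = fun y => A₂ y * (u y * u y) := by
      funext y; rw [h1 y]; ring
    have e2 : pd 1 A₀ = fun y => -(A₁ y * (u y * u y)) := by
      funext y; rw [h2 y]; ring
    rw [e1, e2] at comm
    rw [pd_neg (fun y => A₁ y * (u y * u y)) 0 x] at comm
    rw [pd_mul A₂ (fun y => u y * u y) 1 x (h2d x) ((hud x).mul (hud x))] at comm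
    rw [pd_mul A₁ (fun y => u y * u y) 0 x (h1d x) ((hud x).mul (hud x))] at comm
    rw [pd_mul u u 1 x (hud x) (hud x), pd_mul u u 0 x (hud x) (hud x)] at comm
    have h3x := h3 x
    nlinarith [comm, h3x, sq_nonneg (u x)]
  exact ⟨key, fun x hx => by
    have := key x
    exact (mul_eq_zero.mp this).resolve_left hx⟩
end
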